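/- Let ψ ≥ 0. Then ∫₀¹ Φ(ψ + Φ⁻¹(x)) dx = Φ(ψ/√2); that is, the area under the ROC curve R(x) = Φ(ψ + Φ⁻¹(x)) of the Gaussian mechanism with sensitivity index ψ equals Φ(ψ/√2). -/

import Mathlib

open MeasureTheory ProbabilityTheory Real

open Set Filter Topology

open scoped ENNReal NNReal

/-- `Φ`, the cumulative distribution function of the standard normal distribution. -/
noncomputable def stdNormalCDF (x : ℝ) : ℝ := ((gaussianReal 0 1) (Set.Iic x)).toReal


lemma stdNormalCDF_eq_integral (x : ℝ) :
    stdNormalCDF x = ∫ t in Iic x, gaussianPDFReal 0 1 t := by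
  rw [stdNormalCDF, gaussianReal_apply_eq_integral 0 one_ne_zero, ENNReal.toReal_ofReal]
  exact setIntegral_nonneg measurableSet_Iic fun t _ => gaussianPDFReal_nonneg _ _ _

lemma stdNormalCDF_eq_cdf : stdNormalCDF = cdf (gaussianReal 0 1) := by
  ext x; rw [cdf_eq_real]; rfl

lemma hasDerivAt_stdNormalCDF (x : ℝ) :
    HasDerivAt stdNormalCDF (gaussianPDFReal 0 1 x) x := by
  have key : ∀ y, stdNormalCDF y
      = stdNormalCDF 0 + ∫ t in (0:ℝ)..y, gaussianPDFReal 0 1 t := by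
    intro y
    rw [stdNormalCDF_eq_integral, stdNormalCDF_eq_integral,
      ← intervalIntegral.integral_Iic_sub_Iic ((integrable_gaussianPDFReal 0 1).integrableOn)
        ((integrable_gaussianPDFReal 0 1).integrableOn)]
    abel
  have h2 : HasDerivAt (fun y => stdNormalCDF 0 + ∫ t in (0:ℝ)..y, gaussianPDFReal 0 1 t)
      (gaussianPDFReal 0 1 x) x := by
    refine HasDerivAt.const_add _ ?_
    refine intervalIntegral.integral_hasDerivAt_right
      ((integrable_gaussianPDFReal 0 1).intervalIntegrable)
      ((measurable_gaussianPDFReal 0 1).aestronglyMeasurable.stronglyMeasurableAtFilter) ?_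
    exact Continuous.continuousAt (by unfold gaussianPDFReal; fun_prop)
  exact (funext key : stdNormalCDF = _) ▸ h2

lemma continuous_stdNormalCDF : Continuous stdNormalCDF :=
  continuous_iff_continuousAt.2 fun x => (hasDerivAt_stdNormalCDF x).continuousAt

lemma strictMono_stdNormalCDF : StrictMono stdNormalCDF :=
  strictMono_of_deriv_pos (fun x => by
    rw [(hasDerivAt_stdNormalCDF x).deriv]
    exact gaussianPDFReal_pos _ _ _ one_ne_zero)

lemma stdNormalCDF_mem_Ioo (x : ℝ) : stdNormalCDF x ∈ Ioo (0:ℝ) 1 := by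
  have hvol := gaussianReal_absolutelyContinuous' 0 one_ne_zero
  have h1 : gaussianReal 0 1 (Iic x) ≠ 0 := by
    intro h
    have := hvol h
    simp [Real.volume_Iic] at this
  have h2 : gaussianReal 0 1 (Iic x) ≠ 1 := by
    intro h
    have hc : gaussianReal 0 1 (Ioi x) = 0 := by
      have hcompl := measure_compl (μ := gaussianReal 0 1) (s := Iic x)
        measurableSet_Iic (measure_ne_top _ _)
      rw [compl_Iic, h, measure_univ] at hcompl
      simp [hcompl]
    have := hvol hc
    simp [Real.volume_Ioi] at this
  constructor
  · exact ENNReal.toReal_pos h1 (measure_ne_top _ _)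
  · rw [stdNormalCDF, show (1:ℝ) = (1:ℝ≥0∞).toReal by simp]
    exact ENNReal.toReal_strict_mono ENNReal.one_ne_top (lt_of_le_of_ne prob_le_one h2)

lemma range_stdNormalCDF : range stdNormalCDF = Ioo 0 1 := by
  apply Subset.antisymm
  · rintro _ ⟨x, rfl⟩; exact stdNormalCDF_mem_Ioo x
  · intro y hy
    obtain ⟨a, ha⟩ : ∃ a, stdNormalCDF a < y := by
      have h := (tendsto_cdf_atBot (gaussianReal 0 1)).eventually_lt_const hy.1
      rw [← stdNormalCDF_eq_cdf] at h
      exact h.exists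
    obtain ⟨b, hb⟩ : ∃ b, y < stdNormalCDF b := by
      have h := (tendsto_cdf_atTop (gaussianReal 0 1)).eventually_const_lt hy.2
      rw [← stdNormalCDF_eq_cdf] at h
      exact h.exists
    exact intermediate_value_univ a b continuous_stdNormalCDF ⟨ha.le, hb.le⟩


/-- `Φ⁻¹`, the standard normal quantile function (inverse of `Φ`). -/
noncomputable def stdNormalCDFInv : ℝ → ℝ := Function.invFun stdNormalCDF


lemma stdNormalCDFInv_comp (x : ℝ) : stdNormalCDFInv (stdNormalCDF x) = x :=
  Function.leftInverse_invFun strictMono_stdNormalCDF.injective x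

lemma change_of_var (g : ℝ → ℝ) :
    ∫ x in Ioo (0:ℝ) 1, g x = ∫ z, gaussianPDFReal 0 1 z * g (stdNormalCDF z) := by
  have h := integral_image_eq_integral_abs_deriv_smul (s := (univ : Set ℝ))
    MeasurableSet.univ
    (fun x _ => (hasDerivAt_stdNormalCDF x).hasDerivWithinAt)
    (strictMono_stdNormalCDF.injective.injOn) g
  rw [image_univ, range_stdNormalCDF] at h
  rw [h, setIntegral_univ]
  congr 1; ext z
  rw [abs_of_nonneg (gaussianPDFReal_nonneg _ _ _), smul_eq_mul]

lemma sqrt_pi_mul : Real.sqrt π * Real.sqrt π = π := Real.mul_self_sqrt pi_pos.le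

lemma conv_pdf (u : ℝ) :
    ∫ z, gaussianPDFReal 0 1 (u + z) * gaussianPDFReal 0 1 z = gaussianPDFReal 0 2 u := by
  have key : ∀ z, gaussianPDFReal 0 1 (u + z) * gaussianPDFReal 0 1 z
      = ((2*π)⁻¹ * rexp (-u^2/4)) * rexp (-(z + u/2)^2) := by
    intro z
    simp only [gaussianPDFReal, sub_zero, NNReal.coe_one, mul_one]
    have e1 : ((2*π)⁻¹ * rexp (-u^2/4)) * rexp (-(z + u/2)^2)
        = (2*π)⁻¹ * rexp (-(u+z)^2/2 + -z^2/2) := by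
      rw [mul_assoc, ← Real.exp_add]
      congr 2
      ring
    have e2 : ((Real.sqrt (2*π))⁻¹ : ℝ) * (Real.sqrt (2*π))⁻¹ = (2*π)⁻¹ := by
      rw [← mul_inv, Real.mul_self_sqrt (by positivity)]
    rw [e1, Real.exp_add, ← e2]
    ring
  simp_rw [key]
  rw [integral_const_mul]
  have h1 : ∫ (z : ℝ), rexp (-(z + u/2)^2) = Real.sqrt π := by
    rw [integral_add_right_eq_self (fun z => rexp (-z^2)) (u/2)]
    have := integral_gaussian 1
    simpa using this
  rw [h1]
  simp only [gaussianPDFReal, sub_zero]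
  have h2 : ((2:ℝ≥0):ℝ) = 2 := rfl
  rw [h2, show (2:ℝ)*π*2 = (2*Real.sqrt π)^2 by nlinarith [sqrt_pi_mul],
    Real.sqrt_sq (by positivity)]
  rw [show -u^2/(2*2) = -u^2/4 by ring]
  have h3 : ((2*π)⁻¹ * rexp (-u^2/4)) * Real.sqrt π = (2*Real.sqrt π)⁻¹ * rexp (-u^2/4) := by
    rw [show (2:ℝ)*π = (2*Real.sqrt π) * Real.sqrt π by nlinarith [sqrt_pi_mul], mul_inv]
    have hs : Real.sqrt π ≠ 0 := by positivity
    field_simp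
  rw [← h3]

lemma stdNormalCDF_shift (ψ z : ℝ) :
    stdNormalCDF (ψ + z) = ∫ u in Iic ψ, gaussianPDFReal 0 1 (u + z) := by
  rw [stdNormalCDF_eq_integral]
  have h := (measurePreserving_add_right (volume : Measure ℝ) z).setIntegral_preimage_emb
    (Homeomorph.addRight z).isClosedEmbedding.measurableEmbedding
    (gaussianPDFReal 0 1) (Iic (ψ + z))
  rw [← h]
  congr 1
  ext u
  simp [Homeomorph.addRight]

lemma stdNormalCDF_div_sqrt_two (ψ : ℝ) :
    stdNormalCDF (ψ / Real.sqrt 2) = ∫ u in Iic ψ, gaussianPDFReal 0 2 u := by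
  have hmap : (gaussianReal 0 1).map (fun x => Real.sqrt 2 * x) = gaussianReal 0 2 := by
    have h := gaussianReal_map_const_mul (μ := 0) (v := 1) (Real.sqrt 2)
    rw [show ((Real.sqrt 2 * ·) : ℝ → ℝ) = fun x => Real.sqrt 2 * x from rfl] at h
    rw [h, mul_zero]
    congr 1
    refine NNReal.eq ?_
    push_cast
    rw [Real.sq_sqrt (by norm_num)]
    norm_num
  have h2 : gaussianReal 0 2 (Iic ψ) = gaussianReal 0 1 (Iic (ψ / Real.sqrt 2)) := by
    rw [← hmap, Measure.map_apply (measurable_const_mul _) measurableSet_Iic]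
    congr 1
    ext x
    simp only [mem_preimage, mem_Iic]
    rw [mul_comm, ← le_div_iff₀ (by positivity : (0:ℝ) < Real.sqrt 2)]
  rw [stdNormalCDF, ← h2,
    gaussianReal_apply_eq_integral 0 (two_ne_zero) (Iic ψ), ENNReal.toReal_ofReal]
  exact setIntegral_nonneg measurableSet_Iic fun t _ => gaussianPDFReal_nonneg _ _ _

lemma integrable_shift (z : ℝ) : Integrable (fun u => gaussianPDFReal 0 1 (u + z)) := by
  have h := (integrable_gaussianPDFReal 0 1).comp_sub_right (-z)
  simpa [sub_neg_eq_add] using h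

lemma hInt (ψ : ℝ) : Integrable
    (Function.uncurry fun z u => gaussianPDFReal 0 1 (u + z) * gaussianPDFReal 0 1 z)
    ((volume : Measure ℝ).prod (volume.restrict (Iic ψ))) := by
  have hmeas : AEStronglyMeasurable
      (fun p : ℝ × ℝ => gaussianPDFReal 0 1 (p.2 + p.1) * gaussianPDFReal 0 1 p.1)
      ((volume : Measure ℝ).prod (volume.restrict (Iic ψ))) :=
    (((measurable_gaussianPDFReal 0 1).comp (measurable_snd.add measurable_fst)).mul
      ((measurable_gaussianPDFReal 0 1).comp measurable_fst)).aestronglyMeasurable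
  have huncurry : (Function.uncurry fun z u =>
      gaussianPDFReal 0 1 (u + z) * gaussianPDFReal 0 1 z)
      = fun p : ℝ × ℝ => gaussianPDFReal 0 1 (p.2 + p.1) * gaussianPDFReal 0 1 p.1 := rfl
  rw [huncurry, integrable_prod_iff hmeas]
  constructor
  · refine ae_of_all _ fun z => ?_
    show Integrable (fun u => gaussianPDFReal 0 1 (u + z) * gaussianPDFReal 0 1 z)
      (volume.restrict (Iic ψ))
    exact ((integrable_shift z).mul_const _).restrict
  · refine Integrable.mono (integrable_gaussianPDFReal 0 1)
      hmeas.norm.integral_prod_right' (ae_of_all _ fun z => ?_)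
    show ‖∫ u in Iic ψ, ‖gaussianPDFReal 0 1 (u + z) * gaussianPDFReal 0 1 z‖‖
      ≤ ‖gaussianPDFReal 0 1 z‖
    have hnn : ∀ u, (0:ℝ) ≤ gaussianPDFReal 0 1 (u + z) * gaussianPDFReal 0 1 z :=
      fun u => mul_nonneg (gaussianPDFReal_nonneg _ _ _) (gaussianPDFReal_nonneg _ _ _)
    have heq : (∫ u in Iic ψ, ‖gaussianPDFReal 0 1 (u + z) * gaussianPDFReal 0 1 z‖)
        = ∫ u in Iic ψ, gaussianPDFReal 0 1 (u + z) * gaussianPDFReal 0 1 z := by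
      congr 1; ext u; exact norm_of_nonneg (hnn u)
    rw [norm_of_nonneg (integral_nonneg fun u => norm_nonneg _), heq,
      norm_of_nonneg (gaussianPDFReal_nonneg 0 1 z)]
    calc ∫ u in Iic ψ, gaussianPDFReal 0 1 (u + z) * gaussianPDFReal 0 1 z
        ≤ ∫ u, gaussianPDFReal 0 1 (u + z) * gaussianPDFReal 0 1 z :=
          setIntegral_le_integral ((integrable_shift z).mul_const _)
            (ae_of_all _ fun u => hnn u)
      _ = (∫ u, gaussianPDFReal 0 1 (u + z)) * gaussianPDFReal 0 1 z :=
          integral_mul_const _ _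
      _ = gaussianPDFReal 0 1 z := by
          rw [integral_add_right_eq_self (gaussianPDFReal 0 1) z,
            integral_gaussianPDFReal_eq_one 0 one_ne_zero, one_mul]


/-- the area under the ROC curve `R(x) = Φ(ψ + Φ⁻¹(x))` of the Gaussian
mechanism with sensitivity index `ψ ≥ 0` equals `Φ(ψ/√2)`. -/
theorem gaussian_mechanism_auc (ψ : ℝ) (hψ : 0 ≤ ψ) :
    ∫ x in Set.Ioo (0 : ℝ) 1, stdNormalCDF (ψ + stdNormalCDFInv x) =
      stdNormalCDF (ψ / Real.sqrt 2) := by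
  rw [change_of_var (fun x => stdNormalCDF (ψ + stdNormalCDFInv x))]
  have hstep : ∀ z, gaussianPDFReal 0 1 z
        * stdNormalCDF (ψ + stdNormalCDFInv (stdNormalCDF z))
      = ∫ u in Iic ψ, gaussianPDFReal 0 1 (u + z) * gaussianPDFReal 0 1 z := by
    intro z
    rw [stdNormalCDFInv_comp, stdNormalCDF_shift,
      mul_comm (gaussianPDFReal 0 1 z), ← integral_mul_const]
  simp only [hstep]
  rw [integral_integral_swap (hInt ψ), stdNormalCDF_div_sqrt_two]
  exact setIntegral_congr_fun measurableSet_Iic fun u _ => conv_pdf u
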